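/- In the setting of the spectral expansion (Hilbert spaces X ↪ H compactly, orthonormal basis (ι u_j) of H with eigenvalues λ_j² and ‖v‖_X² = Σ_j λ_j²(ιv, ιu_j)², fix an eigenvalue λ and spectral gap τ > 0 with |λ_j² - λ²| ≥ τ whenever λ_j ≠ λ. Let P be the X-orthogonal-type projection P v = Σ_{λ_j ≠ λ} (ιv, ιu_j) u_j. If v ∈ X satisfies (λ² ι*Bι - A*BA)v = ι*Bw for some w ∈ H, then ‖ι P v‖_H ≤ ‖w‖_H / τ and ‖P v‖_X ≤ √(λ² + τ)·‖w‖_H / τ. -/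

import Mathlib

theorem resolvent_estimates
    {X H : Type*} [NormedAddCommGroup X] [InnerProductSpace ℝ X] [CompleteSpace X]
    [NormedAddCommGroup H] [InnerProductSpace ℝ H] [CompleteSpace H]
    (ι : X →L[ℝ] H) (hι : IsCompactOperator ι)
    (A : X →L[ℝ] H) (hA : ∀ u : X, ‖A u‖ = ‖u‖)
    (u : ℕ → X) (lam : ℕ → ℝ)
    (honb : Orthonormal ℝ (fun j => ι (u j)))
    (hexp : ∀ v : X, ‖v‖ ^ 2 = ∑' j, (lam j) ^ 2 * (inner ℝ (ι v) (ι (u j)) : ℝ) ^ 2)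
    (hsum : ∀ v : X, HasSum (fun j => (inner ℝ (ι v) (ι (u j)) : ℝ) • u j) v)
    (hAu : ∀ j k, (inner ℝ (A (u j)) (A (u k)) : ℝ) = if j = k then (lam j) ^ 2 else 0)
    (μ τ : ℝ) (hτ : 0 < τ)
    (hgap : ∀ j, lam j ≠ μ → τ ≤ |(lam j) ^ 2 - μ ^ 2|)
    (v Pv : X) (w : H)
    (heq : ∀ z : X,
      μ ^ 2 * (inner ℝ (ι v) (ι z) : ℝ) - (inner ℝ (A v) (A z) : ℝ) = (inner ℝ w (ι z) : ℝ))
    (hP : HasSum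
      (fun j : {j : ℕ // lam j ≠ μ} => (inner ℝ (ι v) (ι (u j)) : ℝ) • u (j : ℕ)) Pv) :
    ‖ι Pv‖ ≤ ‖w‖ / τ ∧ ‖Pv‖ ≤ Real.sqrt (μ ^ 2 + τ) * ‖w‖ / τ := by
  classical
  set c : ℕ → ℝ := fun j => (inner ℝ (ι v) (ι (u j)) : ℝ) with hc
  have hite : ∀ j k : ℕ, (inner ℝ (ι (u j)) (ι (u k)) : ℝ) = if j = k then 1 else 0 :=
    orthonormal_iff_ite.mp honb
  -- (A v, A u_k) = lam_k^2 c_k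
  have hAv : ∀ k, (inner ℝ (A v) (A (u k)) : ℝ) = lam k ^ 2 * c k := by
    intro k
    have h1 := (hsum v).mapL ((innerSL ℝ (A (u k))).comp A)
    have h2 : (fun j => ((innerSL ℝ (A (u k))).comp A) (c j • u j))
        = fun j => if j = k then lam k ^ 2 * c k else 0 := by
      funext j
      simp only [ContinuousLinearMap.comp_apply, map_smul, innerSL_apply_apply,
        innerSL_apply_apply, smul_eq_mul]
      rw [hAu k j]
      by_cases h : j = k
      · subst h; simp [mul_comm]
      · simp [h, Ne.symm h]
    rw [h2] at h1
    have h3 : HasSum (fun j => if j = k then lam k ^ 2 * c k else 0) (lam k ^ 2 * c k) :=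
      hasSum_ite_eq k _
    have h4 : ((innerSL ℝ (A (u k))).comp A) v = lam k ^ 2 * c k := h1.unique h3
    rw [real_inner_comm]
    simpa using h4
  -- (w, ι u_k) = (μ² - lam_k²) c_k
  have hw : ∀ k, (inner ℝ w (ι (u k)) : ℝ) = (μ ^ 2 - lam k ^ 2) * c k := by
    intro k
    have h := heq (u k)
    rw [hAv k] at h
    rw [← h]; ring
  -- sum for ι Pv
  have hPι : HasSum (fun j : {j : ℕ // lam j ≠ μ} => c (j : ℕ) • ι (u (j : ℕ))) (ι Pv) := by
    have := hP.mapL ι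
    simpa using this
  -- coefficients of ι Pv
  have hcoef : ∀ k : {j : ℕ // lam j ≠ μ}, (inner ℝ (ι Pv) (ι (u (k : ℕ))) : ℝ) = c (k : ℕ) := by
    intro k
    have h1 := hPι.mapL (innerSL ℝ (ι (u (k : ℕ))))
    have h2 : (fun j : {j : ℕ // lam j ≠ μ} => (innerSL ℝ (ι (u (k : ℕ)))) (c (j : ℕ) • ι (u (j : ℕ))))
        = fun j => if j = k then c (k : ℕ) else 0 := by
      funext j
      simp only [innerSL_apply_apply, inner_smul_right, hite]
      by_cases h : j = k
      · subst h; simp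
      · have : (k : ℕ) ≠ (j : ℕ) := fun hk => h (Subtype.ext hk.symm)
        simp [h, this]
    rw [h2] at h1
    have h3 := h1.unique (hasSum_ite_eq k _)
    rw [real_inner_comm]
    simpa using h3
  have hcoef0 : ∀ k : ℕ, lam k = μ → (inner ℝ (ι Pv) (ι (u k)) : ℝ) = 0 := by
    intro k hk
    have h1 := hPι.mapL (innerSL ℝ (ι (u k)))
    have h2 : (fun j : {j : ℕ // lam j ≠ μ} => (innerSL ℝ (ι (u k))) (c (j : ℕ) • ι (u (j : ℕ))))
        = fun _ => (0 : ℝ) := by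
      funext j
      have hkj : k ≠ (j : ℕ) := by
        intro h; exact j.2 (h ▸ hk)
      simp [inner_smul_right, hite, hkj]
    rw [h2] at h1
    have h3 := h1.unique hasSum_zero
    rw [real_inner_comm]
    simpa using h3
  -- ‖ι Pv‖² = Σ c_j²
  have hnormsq : HasSum (fun j : {j : ℕ // lam j ≠ μ} => c (j : ℕ) ^ 2) (‖ι Pv‖ ^ 2) := by
    have h1 := hPι.mapL (innerSL ℝ (ι Pv))
    have h2 : (fun j : {j : ℕ // lam j ≠ μ} => (innerSL ℝ (ι Pv)) (c (j : ℕ) • ι (u (j : ℕ))))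
        = fun j : {j : ℕ // lam j ≠ μ} => c (j : ℕ) ^ 2 := by
      funext j
      simp only [innerSL_apply_apply, inner_smul_right]
      rw [hcoef j]; ring
    rw [h2] at h1
    have h3 : (innerSL ℝ (ι Pv)) (ι Pv) = ‖ι Pv‖ ^ 2 := by
      simp [real_inner_self_eq_norm_sq]
    rwa [h3] at h1
  -- Bessel for w
  have hbsum : Summable (fun j : ℕ => (inner ℝ w (ι (u j)) : ℝ) ^ 2) := by
    have := honb.inner_products_summable w
    refine this.congr fun j => ?_
    rw [real_inner_comm, Real.norm_eq_abs, sq_abs]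
  have hbes : ∑' j : ℕ, (inner ℝ w (ι (u j)) : ℝ) ^ 2 ≤ ‖w‖ ^ 2 := by
    have := honb.tsum_inner_products_le w
    calc ∑' j : ℕ, (inner ℝ w (ι (u j)) : ℝ) ^ 2
        = ∑' j : ℕ, ‖(inner ℝ (ι (u j)) w : ℝ)‖ ^ 2 := by
          refine tsum_congr fun j => ?_
          rw [real_inner_comm, Real.norm_eq_abs, sq_abs]
      _ ≤ ‖w‖ ^ 2 := this
  have hbsumS : Summable (fun j : {j : ℕ // lam j ≠ μ} => (inner ℝ w (ι (u (j : ℕ))) : ℝ) ^ 2) :=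
    hbsum.subtype _
  have hbesS : ∑' j : {j : ℕ // lam j ≠ μ}, (inner ℝ w (ι (u (j : ℕ))) : ℝ) ^ 2 ≤ ‖w‖ ^ 2 := by
    refine le_trans ?_ hbes
    exact Summable.tsum_le_tsum_of_inj (Subtype.val) Subtype.val_injective
      (fun _ _ => sq_nonneg _) (fun _ => le_rfl) hbsumS hbsum
  -- First estimate
  have est1sq : τ ^ 2 * ‖ι Pv‖ ^ 2 ≤ ‖w‖ ^ 2 := by
    have h1 : HasSum (fun j : {j : ℕ // lam j ≠ μ} => τ ^ 2 * c (j : ℕ) ^ 2)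
        (τ ^ 2 * ‖ι Pv‖ ^ 2) := hnormsq.mul_left _
    have hterm : ∀ j : {j : ℕ // lam j ≠ μ},
        τ ^ 2 * c (j : ℕ) ^ 2 ≤ (inner ℝ w (ι (u (j : ℕ))) : ℝ) ^ 2 := by
      intro j
      rw [hw]
      have hd := hgap (j : ℕ) j.2
      have hd2 : τ ^ 2 ≤ (lam (j : ℕ) ^ 2 - μ ^ 2) ^ 2 := by
        have := pow_le_pow_left₀ hτ.le hd 2
        rwa [sq_abs] at this
      nlinarith [sq_nonneg (c (j : ℕ))]
    calc τ ^ 2 * ‖ι Pv‖ ^ 2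
        = ∑' j : {j : ℕ // lam j ≠ μ}, τ ^ 2 * c (j : ℕ) ^ 2 := h1.tsum_eq.symm
      _ ≤ ∑' j : {j : ℕ // lam j ≠ μ}, (inner ℝ w (ι (u (j : ℕ))) : ℝ) ^ 2 :=
          Summable.tsum_le_tsum hterm h1.summable hbsumS
      _ ≤ ‖w‖ ^ 2 := hbesS
  have est1 : ‖ι Pv‖ ≤ ‖w‖ / τ := by
    have hsq : ‖ι Pv‖ ^ 2 ≤ (‖w‖ / τ) ^ 2 := by
      rw [div_pow]
      rw [le_div_iff₀ (by positivity)]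
      linarith [est1sq]
    have h1 : (0 : ℝ) ≤ ‖w‖ / τ := by positivity
    nlinarith [norm_nonneg (ι Pv)]
  refine ⟨est1, ?_⟩
  -- Second estimate
  set K : ℝ := (μ ^ 2 + τ) / τ ^ 2 with hK
  have hterm2 : ∀ j : {j : ℕ // lam j ≠ μ},
      lam (j : ℕ) ^ 2 * c (j : ℕ) ^ 2 ≤ K * (inner ℝ w (ι (u (j : ℕ))) : ℝ) ^ 2 := by
    intro j
    rw [hw, hK]
    have hd := hgap (j : ℕ) j.2
    set d : ℝ := lam (j : ℕ) ^ 2 - μ ^ 2 with hdd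
    have hd2 : τ ^ 2 ≤ d ^ 2 := by
      have := pow_le_pow_left₀ hτ.le hd 2
      rwa [sq_abs] at this
    -- lam j ^2 = μ^2 + d; want (μ²+d) τ² ≤ (μ²+τ) d² (using |d| ≥ τ)
    have key : (μ ^ 2 + d) * τ ^ 2 ≤ (μ ^ 2 + τ) * d ^ 2 := by
      have h1 : μ ^ 2 * τ ^ 2 ≤ μ ^ 2 * d ^ 2 :=
        mul_le_mul_of_nonneg_left hd2 (sq_nonneg μ)
      rcases le_abs.mp hd with h | h
      · have hdpos : (0 : ℝ) ≤ d := le_trans hτ.le h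
        have h2 := mul_le_mul_of_nonneg_left h (mul_nonneg hτ.le hdpos)
        nlinarith [h1, h2]
      · have hdneg : d ≤ -τ := by linarith
        have h2 : d * τ ^ 2 ≤ 0 := by nlinarith
        have h3 : (0 : ℝ) ≤ τ * d ^ 2 := by positivity
        nlinarith [h1, h2, h3]
    have hlam : lam (j : ℕ) ^ 2 = μ ^ 2 + d := by rw [hdd]; ring
    rw [div_mul_eq_mul_div, le_div_iff₀ (by positivity : (0:ℝ) < τ ^ 2)]
    have hmain := mul_le_mul_of_nonneg_right key (sq_nonneg (c (j : ℕ)))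
    have expand : ((μ ^ 2 - lam (j : ℕ) ^ 2) * c (j : ℕ)) ^ 2 = d ^ 2 * c (j : ℕ) ^ 2 := by
      rw [hdd]; ring
    rw [expand, hlam]
    nlinarith [hmain]
  have hKnn : 0 ≤ K := by
    have : 0 ≤ μ ^ 2 + τ := by positivity
    positivity
  have hsum2 : Summable (fun j : {j : ℕ // lam j ≠ μ} => lam (j : ℕ) ^ 2 * c (j : ℕ) ^ 2) := by
    refine Summable.of_nonneg_of_le (fun j => by positivity) hterm2 ?_
    exact hbsumS.mul_left K
  have hPvsq : ‖Pv‖ ^ 2 = ∑' j : {j : ℕ // lam j ≠ μ}, lam (j : ℕ) ^ 2 * c (j : ℕ) ^ 2 := by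
    rw [hexp Pv]
    rw [← tsum_subtype_eq_of_support_subset (s := {j : ℕ | lam j ≠ μ})
      (f := fun j => lam j ^ 2 * (inner ℝ (ι Pv) (ι (u j)) : ℝ) ^ 2) ?_]
    · refine tsum_congr fun j => ?_
      rw [hcoef ⟨j.1, j.2⟩]
    · intro j hj
      simp only [Set.mem_setOf_eq]
      intro hcon
      exact hj (by simp [hcoef0 j hcon])
  have est2sq : ‖Pv‖ ^ 2 ≤ K * ‖w‖ ^ 2 := by
    rw [hPvsq]
    calc ∑' j : {j : ℕ // lam j ≠ μ}, lam (j : ℕ) ^ 2 * c (j : ℕ) ^ 2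
        ≤ ∑' j : {j : ℕ // lam j ≠ μ}, K * (inner ℝ w (ι (u (j : ℕ))) : ℝ) ^ 2 :=
          Summable.tsum_le_tsum hterm2 hsum2 (hbsumS.mul_left K)
      _ = K * ∑' j : {j : ℕ // lam j ≠ μ}, (inner ℝ w (ι (u (j : ℕ))) : ℝ) ^ 2 := by
          rw [tsum_mul_left]
      _ ≤ K * ‖w‖ ^ 2 := mul_le_mul_of_nonneg_left hbesS hKnn
  have hrhs : (Real.sqrt (μ ^ 2 + τ) * ‖w‖ / τ) ^ 2 = K * ‖w‖ ^ 2 := by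
    rw [hK, div_pow, mul_pow, Real.sq_sqrt (by positivity)]
    ring
  have hsq : ‖Pv‖ ^ 2 ≤ (Real.sqrt (μ ^ 2 + τ) * ‖w‖ / τ) ^ 2 := by
    rw [hrhs]; exact est2sq
  have h1 : (0 : ℝ) ≤ Real.sqrt (μ ^ 2 + τ) * ‖w‖ / τ := by positivity
  nlinarith [norm_nonneg Pv]
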